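/- arXiv:2109.04225 — 2 statements merged into one kernel-verified Lean document; each statement's English description precedes it below -/
import Mathlib

section
/- Suppose the càdlàg path S : [0,T] → ℝ^d satisfies Property (RIE) with respect to p ∈ (2,3) and the nested partitions (P^n)_{n∈ℕ}. Define A : Δ_{[0,T]} → ℝ^{d×d} by A_{s,t} := ∫ₛᵗ S_u ⊗ dS_u − S_s ⊗ S_{s,t}, where ∫ₛᵗ S_u ⊗ dS_u := ∫₀ᵗ S_u ⊗ dS_u − ∫₀ˢ S_u ⊗ dS_u. Then the triplet S = (S,S,A) is a càdlàg p-rough path: A satisfies Chen's relation A_{s,t} = A_{s,u} + A_{u,t} + S_{s,u} ⊗ S_{u,t}, A is càdlàg in each variable, and ‖A‖_{p/2,[0,T]} ≤ C w(0,T)^{2/p} < ∞ for a constant C depending only on p, where w is the control function from condition (c) of Property (RIE). -/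
open Set Filter MeasureTheory
open scoped Topology InnerProductSpace BigOperators

noncomputable section

/-- `ℝ^d` with the Euclidean norm. -/
abbrev Vec (d : ℕ) := EuclideanSpace ℝ (Fin d)

/-- `ℝ^{d×d}` with the Euclidean (Frobenius) norm. -/
abbrev Mat (d : ℕ) := EuclideanSpace ℝ (Fin d × Fin d)

def mkVec {d : ℕ} (f : Fin d → ℝ) : Vec d := (WithLp.equiv 2 (Fin d → ℝ)).symm f

def mkMat {d : ℕ} (f : Fin d × Fin d → ℝ) : Mat d := (WithLp.equiv 2 (Fin d × Fin d → ℝ)).symm f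

/-- The tensor product `a ⊗ b` of two vectors, as a `d × d` matrix. -/
def tensor {d : ℕ} (a b : Vec d) : Mat d := mkMat (fun ij => a ij.1 * b ij.2)

/-- A matrix (an element of `L(ℝ^d, ℝ^d)`) applied to a vector. -/
def matApply {d : ℕ} (M : Mat d) (v : Vec d) : Vec d := mkVec (fun i => ∑ j, M (i, j) * v j)

/-- The matrix with `(i,j)` entry `Σ_k A_{ki} B_{kj}`, i.e. `AᵀB`. -/
def matTProd {d : ℕ} (A B : Mat d) : Mat d := mkMat (fun ij => ∑ k, A (k, ij.1) * B (k, ij.2))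

/-- The identity matrix. -/
def idMat {d : ℕ} : Mat d := mkMat (fun ij => if ij.1 = ij.2 then (1 : ℝ) else 0)

/-- The contraction `F' G' 𝕏 := Σ_{k,i,j} F'_{ki} G'_{kj} 𝕏_{ij}`. -/
def ddContract {d : ℕ} (A B X : Mat d) : ℝ := ∑ k, ∑ i, ∑ j, A (k, i) * B (k, j) * X (i, j)

/-- The increment process `(s,t) ↦ X_t - X_s` of a path. -/
def inc {E : Type*} [AddCommGroup E] (X : ℝ → E) : ℝ → ℝ → E := fun s t => X t - X s

/-- A (finite) partition `s = τ_0 < τ_1 < ⋯ < τ_N = t` of the interval `[s,t]`. -/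
structure IntervalPartition (s t : ℝ) where
  N : ℕ
  τ : ℕ → ℝ
  Npos : 0 < N
  first : τ 0 = s
  last : τ N = t
  mono : ∀ k < N, τ k < τ (k + 1)

/-- The mesh of the partition is `< δ`. -/
def IntervalPartition.MeshLt {s t : ℝ} (P : IntervalPartition s t) (δ : ℝ) : Prop :=
  ∀ k < P.N, P.τ (k + 1) - P.τ k < δ

/-- The sum `Σ_{[u,v] ∈ P} |A_{u,v}|^p` along a partition `P`, for a two-parameter
function `A`. -/
def varSumOn {E : Type*} [NormedAddCommGroup E] (p : ℝ) (A : ℝ → ℝ → E)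
    {s t : ℝ} (P : IntervalPartition s t) : ℝ :=
  ∑ k ∈ Finset.range P.N, ‖A (P.τ k) (P.τ (k + 1))‖ ^ p

/-- The set of all sums `Σ_{[u,v] ∈ P} |A_{u,v}|^p` over partitions `P` of `[s,t]`. -/
def pVarSums {E : Type*} [NormedAddCommGroup E] (p : ℝ) (A : ℝ → ℝ → E) (s t : ℝ) : Set ℝ :=
  {x | ∃ P : IntervalPartition s t, x = varSumOn p A P}

/-- The `p`-variation `‖A‖_{p,[s,t]} := (sup_P Σ_{[u,v] ∈ P} |A_{u,v}|^p)^{1/p}` of a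
two-parameter function `A` (for a path `X`, apply this to `inc X`). -/
def pVar {E : Type*} [NormedAddCommGroup E] (p : ℝ) (A : ℝ → ℝ → E) (s t : ℝ) : ℝ :=
  sSup (pVarSums p A s t) ^ (1 / p)

/-- `A` has finite `p`-variation on `[s,t]`. -/
def HasBddPVar {E : Type*} [NormedAddCommGroup E] (p : ℝ) (A : ℝ → ℝ → E) (s t : ℝ) : Prop :=
  BddAbove (pVarSums p A s t)

/-- `f` is càdlàg on `[a,b]`: right-continuous on `[a,b)` with left limits on `(a,b]`. -/
def CadlagOn {E : Type*} [TopologicalSpace E] (f : ℝ → E) (a b : ℝ) : Prop :=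
  (∀ t ∈ Ico a b, Tendsto f (𝓝[>] t) (𝓝 (f t))) ∧
  (∀ t ∈ Ioc a b, ∃ l, Tendsto f (𝓝[<] t) (𝓝 l))

/-- The supremum norm of `f` on `[a,b]`. -/
def supNormOn {E : Type*} [NormedAddCommGroup E] (f : ℝ → E) (a b : ℝ) : ℝ :=
  sSup ((fun u => ‖f u‖) '' Icc a b)

/-- A control function on `Δ_{[0,T]}`: nonnegative and superadditive. -/
def IsControl (T : ℝ) (w : ℝ → ℝ → ℝ) : Prop :=
  (∀ ⦃s t : ℝ⦄, 0 ≤ s → s ≤ t → t ≤ T → 0 ≤ w s t) ∧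
  (∀ ⦃s u t : ℝ⦄, 0 ≤ s → s ≤ u → u ≤ t → t ≤ T → w s u + w u t ≤ w s t)

/-- The set of jump times of `f` in `(0,T]`. -/
def jumpSet {E : Type*} [TopologicalSpace E] (f : ℝ → E) (T : ℝ) : Set ℝ :=
  {u | u ∈ Ioc (0 : ℝ) T ∧ Function.leftLim f u ≠ f u}

/-- A càdlàg `p`-rough path `(X, Z, 𝕏)` over `ℝ^d` on `[0,T]`:
`X, Z ∈ D^p([0,T];ℝ^d)`, `𝕏 ∈ D^{p/2}_2(Δ_{[0,T]};ℝ^{d×d})`, and Chen's relation holds. -/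
structure IsRoughPath (d : ℕ) (p T : ℝ) (X Z : ℝ → Vec d) (XX : ℝ → ℝ → Mat d) : Prop where
  cadlagX : CadlagOn X 0 T
  cadlagZ : CadlagOn Z 0 T
  varX : HasBddPVar p (inc X) 0 T
  varZ : HasBddPVar p (inc Z) 0 T
  cadlagXX₁ : ∀ t ∈ Icc (0 : ℝ) T, CadlagOn (fun s => XX s t) 0 t
  cadlagXX₂ : ∀ s ∈ Icc (0 : ℝ) T, CadlagOn (fun t => XX s t) s T
  varXX : HasBddPVar (p / 2) XX 0 T
  chen : ∀ ⦃s u t : ℝ⦄, 0 ≤ s → s ≤ u → u ≤ t → t ≤ T →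
    XX s t = XX s u + XX u t + tensor (Z u - Z s) (X t - X u)

/-- The remainder `R^F_{s,t} := F_{s,t} - F'_s Z_{s,t}` of a controlled path. -/
def rem {d : ℕ} (Z F : ℝ → Vec d) (F' : ℝ → Mat d) : ℝ → ℝ → Vec d :=
  fun s t => F t - F s - matApply (F' s) (Z t - Z s)

/-- `(F, F')` is a controlled path in `𝒱^{q,r}_Z` on `[0,T]` (with `F ∈ D^p`):
`F ∈ D^p([0,T];ℝ^d)`, `F' ∈ D^q([0,T];L(ℝ^d,ℝ^d))` and `R^F ∈ D^r_2(Δ_{[0,T]};ℝ^d)`. -/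
structure IsControlledPath (d : ℕ) (p q r T : ℝ) (Z : ℝ → Vec d)
    (F : ℝ → Vec d) (F' : ℝ → Mat d) : Prop where
  cadlagF : CadlagOn F 0 T
  varF : HasBddPVar p (inc F) 0 T
  cadlagF' : CadlagOn F' 0 T
  varF' : HasBddPVar q (inc F') 0 T
  cadlagR₁ : ∀ t ∈ Icc (0 : ℝ) T, CadlagOn (fun s => rem Z F F' s t) 0 t
  cadlagR₂ : ∀ s ∈ Icc (0 : ℝ) T, CadlagOn (fun t => rem Z F F' s t) s T
  varR : HasBddPVar r (rem Z F F') 0 T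

/-- The controlled path norm `‖F,F'‖_{𝒱^{q,r}_Z,[0,T]} := |F'_0| + ‖F'‖_q + ‖R^F‖_r`. -/
def ctrlNorm {d : ℕ} (q r T : ℝ) (Z F : ℝ → Vec d) (F' : ℝ → Mat d) : ℝ :=
  ‖F' 0‖ + pVar q (inc F') 0 T + pVar r (rem Z F F') 0 T

/-- Compensated Riemann sum `Σ (⟨F_u, G_{u,v}⟩ + F'_u G'_u 𝕏_{u,v})` along a partition of `[0,t]`. -/
def compSum {d : ℕ} (F : ℝ → Vec d) (F' : ℝ → Mat d) (G : ℝ → Vec d) (G' : ℝ → Mat d)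
    (XX : ℝ → ℝ → Mat d) {t : ℝ} (P : IntervalPartition 0 t) : ℝ :=
  ∑ k ∈ Finset.range P.N,
    (⟪F (P.τ k), G (P.τ (k + 1)) - G (P.τ k)⟫_ℝ
      + ddContract (F' (P.τ k)) (G' (P.τ k)) (XX (P.τ k) (P.τ (k + 1))))

/-- `I` is the value at time `t` of the rough integral `∫₀ᵗ F dG`: the compensated Riemann
sums converge to `I` along every sequence of partitions of `[0,t]` with mesh tending to `0`. -/
def IsRoughIntegralAt {d : ℕ} (F : ℝ → Vec d) (F' : ℝ → Mat d) (G : ℝ → Vec d)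
    (G' : ℝ → Mat d) (XX : ℝ → ℝ → Mat d) (t : ℝ) (I : ℝ) : Prop :=
  ∀ ε > 0, ∃ δ > 0, ∀ P : IntervalPartition 0 t, P.MeshLt δ →
    |compSum F F' G G' XX P - I| < ε

/-- The rough path seminorm `‖X‖_{p,[0,T]} + ‖Z‖_{p,[0,T]} + ‖𝕏‖_{p/2,[0,T]}`. -/
def roughNorm {d : ℕ} (p T : ℝ) (X Z : ℝ → Vec d) (XX : ℝ → ℝ → Mat d) : ℝ :=
  pVar p (inc X) 0 T + pVar p (inc Z) 0 T + pVar (p / 2) XX 0 T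

/-- The rough path distance `‖X − X̃‖_p + ‖Z − Z̃‖_p + ‖𝕏 − 𝕏̃‖_{p/2}`. -/
def roughDist {d : ℕ} (p T : ℝ) (X Z X' Z' : ℝ → Vec d) (XX XX' : ℝ → ℝ → Mat d) : ℝ :=
  pVar p (inc (fun u => X u - X' u)) 0 T + pVar p (inc (fun u => Z u - Z' u)) 0 T
    + pVar (p / 2) (fun s t => XX s t - XX' s t) 0 T

/-- A nested sequence of partitions `P^n = {0 = t^n_0 < t^n_1 < ⋯ < t^n_{N_n} = T}` of `[0,T]`
with vanishing mesh size. -/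
structure PartitionSeq (T : ℝ) where
  N : ℕ → ℕ
  t : ℕ → ℕ → ℝ
  Npos : ∀ n, 0 < N n
  first : ∀ n, t n 0 = 0
  last : ∀ n, t n (N n) = T
  mono : ∀ n, ∀ k < N n, t n k < t n (k + 1)
  nested : ∀ n, ∀ k ≤ N n, ∃ l ≤ N (n + 1), t (n + 1) l = t n k
  mesh : ∀ ε > 0, ∃ M : ℕ, ∀ n ≥ M, ∀ k < N n, t n (k + 1) - t n k < ε

/-- The set `∪_{n ∈ ℕ} P^n` of all partition points. -/
def PartitionSeq.points {T : ℝ} (π : PartitionSeq T) : Set ℝ :=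
  {x | ∃ n, ∃ k ≤ π.N n, π.t n k = x}

/-- The left-point discretization
`S^n_u = S_T 1_{{T}}(u) + Σ_k S_{t^n_k} 1_{[t^n_k, t^n_{k+1})}(u)`. -/
def PartitionSeq.disc {T : ℝ} (π : PartitionSeq T) {E : Type*} [NormedAddCommGroup E]
    (S : ℝ → E) (n : ℕ) (u : ℝ) : E :=
  Set.indicator {T} S u
    + ∑ k ∈ Finset.range (π.N n),
        Set.indicator (Ico (π.t n k) (π.t n (k + 1))) (fun _ => S (π.t n k)) u

/-- The Riemann sum `∫₀ᵘ S^n ⊗ dS := Σ_k S_{t^n_k} ⊗ (S_{t^n_{k+1} ∧ u} - S_{t^n_k ∧ u})`. -/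
def riemannSum {d : ℕ} {T : ℝ} (π : PartitionSeq T) (S : ℝ → Vec d) (n : ℕ) (u : ℝ) : Mat d :=
  ∑ k ∈ Finset.range (π.N n),
    tensor (S (π.t n k)) (S (min (π.t n (k + 1)) u) - S (min (π.t n k) u))

/-- The Riemann sum `∫_{t^n_k}^{t^n_l} S^n ⊗ dS` between two partition points. -/
def riemannBetween {d : ℕ} {T : ℝ} (π : PartitionSeq T) (S : ℝ → Vec d) (n k l : ℕ) : Mat d :=
  ∑ j ∈ Finset.Ico k l, tensor (S (π.t n j)) (S (π.t n (j + 1)) - S (π.t n j))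

/-- Property (RIE) for `S` with respect to `p` and `(P^n)`, with Riemann-sum limit `II` and
control function `w`:  `S` is càdlàg, `S^n → S` uniformly, the Riemann sums `∫₀· S^n ⊗ dS`
converge uniformly to `II`, and `w` dominates `|S_{s,t}|^p` as well as
`|∫_{t^n_k}^{t^n_l} S^n ⊗ dS - S_{t^n_k} ⊗ S_{t^n_k,t^n_l}|^{p/2}`. -/
structure SatisfiesRIE (d : ℕ) (p T : ℝ) (π : PartitionSeq T) (S : ℝ → Vec d)
    (II : ℝ → Mat d) (w : ℝ → ℝ → ℝ) : Prop where
  cadlag : CadlagOn S 0 T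
  discUnif : TendstoUniformlyOn (fun n => π.disc S n) S atTop (Icc 0 T)
  riemannUnif : TendstoUniformlyOn (fun n => riemannSum π S n) II atTop (Icc 0 T)
  control : IsControl T w
  domS : ∀ ⦃s t : ℝ⦄, 0 ≤ s → s ≤ t → t ≤ T → ‖S t - S s‖ ^ p ≤ w s t
  domA : ∀ n : ℕ, ∀ ⦃k l : ℕ⦄, k < l → l ≤ π.N n →
    ‖riemannBetween π S n k l - tensor (S (π.t n k)) (S (π.t n l) - S (π.t n k))‖ ^ (p / 2)
      ≤ w (π.t n k) (π.t n l)

/-- The canonical second-level function `A_{s,t} := ∫ₛᵗ S ⊗ dS - S_s ⊗ S_{s,t}`,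
built from the limit `II = ∫₀· S ⊗ dS` of the Riemann sums in Property (RIE). -/
def roughA {d : ℕ} (S : ℝ → Vec d) (II : ℝ → Mat d) : ℝ → ℝ → Mat d :=
  fun s t => II t - II s - tensor (S s) (S t - S s)
/-! ### Auxiliary lemmas -/

section AuxTensor
variable {d : ℕ}

lemma tensor_apply' (a b : Vec d) (ij : Fin d × Fin d) : tensor a b ij = a ij.1 * b ij.2 := rfl

lemma tensor_sub_left' (a b c : Vec d) : tensor (a - b) c = tensor a c - tensor b c := by
  ext ij; simp [tensor, mkMat, sub_mul]

lemma tensor_sub_right' (a b c : Vec d) : tensor a (b - c) = tensor a b - tensor a c := by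
  ext ij; simp [tensor, mkMat, mul_sub]

lemma tensor_add_right' (a b c : Vec d) : tensor a (b + c) = tensor a b + tensor a c := by
  ext ij; simp [tensor, mkMat, mul_add]

lemma tensor_zero_right' (a : Vec d) : tensor a 0 = 0 := by
  ext ij; simp [tensor, mkMat]

lemma norm_tensor (a b : Vec d) : ‖tensor a b‖ = ‖a‖ * ‖b‖ := by
  rw [EuclideanSpace.norm_eq, EuclideanSpace.norm_eq, EuclideanSpace.norm_eq,
    ← Real.sqrt_mul (by positivity)]
  congr 1
  rw [Finset.sum_mul_sum, Fintype.sum_prod_type]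
  simp [tensor_apply', abs_mul, mul_pow]

/-- Chen's relation for `roughA`. -/
lemma roughA_chen (S : ℝ → Vec d) (II : ℝ → Mat d) (s u t : ℝ) :
    roughA S II s t = roughA S II s u + roughA S II u t + tensor (S u - S s) (S t - S u) := by
  unfold roughA
  rw [tensor_sub_left']
  have h : tensor (S s) (S t - S s)
      = tensor (S s) (S u - S s) + tensor (S s) (S t - S u) := by
    rw [← tensor_add_right']; congr 1; abel
  rw [h]; abel

lemma tendsto_tensor {α : Type*} {l : Filter α} {f g : α → Vec d} {a b : Vec d}
    (hf : Tendsto f l (𝓝 a)) (hg : Tendsto g l (𝓝 b)) :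
    Tendsto (fun x => tensor (f x) (g x)) l (𝓝 (tensor a b)) := by
  rw [tendsto_iff_norm_sub_tendsto_zero]
  have hbound : ∀ x, ‖tensor (f x) (g x) - tensor a b‖
      ≤ ‖f x - a‖ * ‖g x‖ + ‖a‖ * ‖g x - b‖ := by
    intro x
    have : tensor (f x) (g x) - tensor a b
        = tensor (f x - a) (g x) + tensor a (g x - b) := by
      rw [tensor_sub_left', tensor_sub_right']; abel
    rw [this]
    refine (norm_add_le _ _).trans ?_
    rw [norm_tensor, norm_tensor]
  have h0 : Tendsto (fun x => ‖f x - a‖ * ‖g x‖ + ‖a‖ * ‖g x - b‖) l (𝓝 0) := by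
    have h1 : Tendsto (fun x => ‖f x - a‖) l (𝓝 0) := by
      simpa using (tendsto_iff_norm_sub_tendsto_zero.1 hf)
    have h2 : Tendsto (fun x => ‖g x - b‖) l (𝓝 0) := by
      simpa using (tendsto_iff_norm_sub_tendsto_zero.1 hg)
    have := (h1.mul hg.norm).add ((tendsto_const_nhds (x := ‖a‖)).mul h2)
    simpa using this
  exact squeeze_zero (fun x => norm_nonneg _) hbound h0

end AuxTensor

section AuxRpow

lemma rpow_invert {x y e : ℝ} (he : 0 < e) (hx : 0 ≤ x) (h : x ^ e ≤ y) : x ≤ y ^ (1 / e) := by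
  have hy : 0 ≤ y := le_trans (Real.rpow_nonneg hx e) h
  calc x = (x ^ e) ^ (1 / e) := by
        rw [← Real.rpow_mul hx, mul_one_div_cancel he.ne', Real.rpow_one]
    _ ≤ y ^ (1 / e) := Real.rpow_le_rpow (Real.rpow_nonneg hx e) h (by positivity)

end AuxRpow

section AuxControl
variable {T : ℝ} {w : ℝ → ℝ → ℝ}

lemma IsControl.mono (hw : IsControl T w) {s a b t : ℝ} (h0 : 0 ≤ s) (hsa : s ≤ a)
    (hab : a ≤ b) (hbt : b ≤ t) (htT : t ≤ T) : w a b ≤ w s t := by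
  have h1 := hw.2 h0 hsa hab (hbt.trans htT)
  have h2 := hw.2 h0 (hsa.trans hab) hbt htT
  have h3 := hw.1 h0 hsa ((hab.trans hbt).trans htT)
  have h4 := hw.1 (h0.trans (hsa.trans hab)) hbt htT
  linarith
end AuxControl
section AuxPartition
variable {T : ℝ} (π : PartitionSeq T)

lemma PartitionSeq.t_mono {n : ℕ} : ∀ {k l : ℕ}, k ≤ l → l ≤ π.N n → π.t n k ≤ π.t n l := by
  intro k l
  induction l with
  | zero =>
    intro hkl _
    have : k = 0 := by omega
    simp [this]
  | succ m ih =>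
    intro hkl hl
    rcases Nat.lt_or_ge k (m+1) with h | h
    · exact le_trans (ih (by omega) (by omega)) (le_of_lt (π.mono n m (by omega)))
    · have : k = m + 1 := by omega
      simp [this]

lemma PartitionSeq.t_strict_mono {n : ℕ} {k l : ℕ} (hkl : k < l) (hl : l ≤ π.N n) :
    π.t n k < π.t n l := by
  have h1 : π.t n k ≤ π.t n (l - 1) := π.t_mono (by omega) (by omega)
  have h2 : π.t n (l - 1) < π.t n (l - 1 + 1) := π.mono n _ (by omega)
  have : l - 1 + 1 = l := by omega
  rw [this] at h2
  exact lt_of_le_of_lt h1 h2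

lemma PartitionSeq.t_mem {n k : ℕ} (hk : k ≤ π.N n) : π.t n k ∈ Icc (0:ℝ) T := by
  constructor
  · have := π.t_mono (Nat.zero_le k) hk
    rw [π.first] at this; exact this
  · have := π.t_mono hk (le_refl _)
    rw [π.last] at this; exact this

lemma PartitionSeq.nested_trans {n m : ℕ} (hnm : n ≤ m) {k : ℕ} (hk : k ≤ π.N n) :
    ∃ l ≤ π.N m, π.t m l = π.t n k := by
  induction m, hnm using Nat.le_induction with
  | base => exact ⟨k, hk, rfl⟩
  | succ m hnm ih =>
    obtain ⟨l, hl, hlt⟩ := ih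
    obtain ⟨l', hl', hlt'⟩ := π.nested m l hl
    exact ⟨l', hl', by rw [hlt', hlt]⟩

/-- least index strictly above `a` gives `t n j ≤ a < t n (j+1)`. -/
lemma PartitionSeq.exists_index_right {n : ℕ} {a : ℝ} (h0 : 0 ≤ a) (hT : a < T) :
    ∃ j < π.N n, π.t n j ≤ a ∧ a < π.t n (j + 1) := by
  classical
  have hQ : ∃ k, a < π.t n k := ⟨π.N n, by rw [π.last]; exact hT⟩
  set k₀ := Nat.find hQ with hk₀
  have hspec : a < π.t n k₀ := Nat.find_spec hQ
  have hk₀N : k₀ ≤ π.N n := Nat.find_le (by rw [π.last]; exact hT)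
  have hk₀0 : k₀ ≠ 0 := by
    intro h
    rw [h, π.first] at hspec; linarith
  refine ⟨k₀ - 1, by omega, ?_, ?_⟩
  · by_contra hlt
    exact Nat.find_min hQ (m := k₀ - 1) (by omega) (by linarith [not_le.1 hlt])
  · have : k₀ - 1 + 1 = k₀ := by omega
    rw [this]; exact hspec

/-- least index `≥ a` gives `t n j < a ≤ t n (j+1)`. -/
lemma PartitionSeq.exists_index_left {n : ℕ} {a : ℝ} (h0 : 0 < a) (hT : a ≤ T) :
    ∃ j < π.N n, π.t n j < a ∧ a ≤ π.t n (j + 1) := by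
  classical
  have hQ : ∃ k, a ≤ π.t n k := ⟨π.N n, by rw [π.last]; exact hT⟩
  set k₀ := Nat.find hQ with hk₀
  have hspec : a ≤ π.t n k₀ := Nat.find_spec hQ
  have hk₀N : k₀ ≤ π.N n := Nat.find_le (by rw [π.last]; exact hT)
  have hk₀0 : k₀ ≠ 0 := by
    intro h
    rw [h, π.first] at hspec; linarith
  refine ⟨k₀ - 1, by omega, ?_, ?_⟩
  · by_contra hlt
    exact Nat.find_min hQ (m := k₀ - 1) (by omega) (by linarith [not_lt.1 hlt])
  · have : k₀ - 1 + 1 = k₀ := by omega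
    rw [this]; exact hspec

/-- density of partition points. -/
lemma PartitionSeq.exists_point_between {a b : ℝ} (h0 : 0 ≤ a) (hab : a < b) (hbT : b ≤ T) :
    ∃ n k, k ≤ π.N n ∧ a < π.t n k ∧ π.t n k < b := by
  obtain ⟨M, hM⟩ := π.mesh (b - a) (by linarith)
  have haT : a < T := lt_of_lt_of_le hab hbT
  obtain ⟨j, hj, hja, haj⟩ := π.exists_index_right (n := M) h0 haT
  refine ⟨M, j + 1, by omega, haj, ?_⟩
  have := hM M (le_refl _) j hj
  linarith

end AuxPartition
section AuxRiemann
variable {d : ℕ} {T : ℝ} (π : PartitionSeq T) (S : ℝ → Vec d)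

lemma riemannBetween_split {n k l : ℕ} (hkl : k ≤ l) :
    riemannBetween π S n 0 k + riemannBetween π S n k l = riemannBetween π S n 0 l := by
  unfold riemannBetween
  exact Finset.sum_Ico_consecutive _ (Nat.zero_le k) hkl

lemma riemannSum_at_point {n l : ℕ} (hl : l ≤ π.N n) :
    riemannSum π S n (π.t n l) = riemannBetween π S n 0 l := by
  unfold riemannSum riemannBetween
  rw [Finset.range_eq_Ico, ← Finset.sum_Ico_consecutive _ (Nat.zero_le l) hl]
  have h2 : ∑ j ∈ Finset.Ico l (π.N n),
      tensor (S (π.t n j)) (S (min (π.t n (j+1)) (π.t n l)) - S (min (π.t n j) (π.t n l))) = 0 := by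
    apply Finset.sum_eq_zero
    intro j hj
    rw [Finset.mem_Ico] at hj
    rw [min_eq_right (π.t_mono hj.1 (le_of_lt hj.2)),
      min_eq_right (π.t_mono (by omega) hj.2)]
    simp [tensor_zero_right']
  rw [h2, add_zero]
  apply Finset.sum_congr rfl
  intro j hj
  rw [Finset.mem_Ico] at hj
  rw [min_eq_left (π.t_mono hj.2 hl), min_eq_left (π.t_mono (by omega) hl)]

lemma riemannSum_local {n j : ℕ} {u v : ℝ} (hj : j < π.N n) (hju : π.t n j ≤ u)
    (huv : u ≤ v) (hv : v ≤ π.t n (j + 1)) :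
    riemannSum π S n v - riemannSum π S n u = tensor (S (π.t n j)) (S v - S u) := by
  unfold riemannSum
  rw [← Finset.sum_sub_distrib]
  have hterm : ∀ k ∈ Finset.range (π.N n),
      (tensor (S (π.t n k)) (S (min (π.t n (k+1)) v) - S (min (π.t n k) v))
        - tensor (S (π.t n k)) (S (min (π.t n (k+1)) u) - S (min (π.t n k) u)))
      = if k = j then tensor (S (π.t n j)) (S v - S u) else 0 := by
    intro k hk
    rw [Finset.mem_range] at hk
    rw [← tensor_sub_right']
    by_cases hkj : k = j
    · subst hkj
      rw [if_pos rfl, min_eq_right hv, min_eq_right (huv.trans hv),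
        min_eq_left (hju.trans huv), min_eq_left hju]
      congr 1; abel
    · rw [if_neg hkj]
      rcases Nat.lt_or_ge k j with h | h
      · have h1 : π.t n (k+1) ≤ u := le_trans (π.t_mono (by omega) (by omega)) hju
        have h2 : π.t n k ≤ u := le_trans (π.t_mono (by omega) (by omega)) hju
        rw [min_eq_left (h1.trans huv), min_eq_left h1, min_eq_left (h2.trans huv),
          min_eq_left h2]
        rw [show (S (π.t n (k+1)) - S (π.t n k)) - (S (π.t n (k+1)) - S (π.t n k)) = 0 by abel]
        exact tensor_zero_right' _
      · have hkj' : j < k := by omega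
        have h1 : v ≤ π.t n k := le_trans hv (π.t_mono (by omega) (by omega))
        have h2 : v ≤ π.t n (k+1) := le_trans hv (π.t_mono (by omega) (by omega))
        rw [min_eq_right h2, min_eq_right (huv.trans h2), min_eq_right h1,
          min_eq_right (huv.trans h1)]
        rw [show S v - S v - (S u - S u) = 0 by abel]
        exact tensor_zero_right' _
  rw [Finset.sum_congr rfl hterm, Finset.sum_ite_eq' (Finset.range (π.N n)) j
    (fun _ => tensor (S (π.t n j)) (S v - S u))]
  rw [if_pos (Finset.mem_range.2 hj)]

end AuxRiemann
section Main
variable {d : ℕ} {p T : ℝ} {π : PartitionSeq T} {S : ℝ → Vec d} {II : ℝ → Mat d}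
  {w : ℝ → ℝ → ℝ}

lemma SatisfiesRIE.S_le_w (H : SatisfiesRIE d p T π S II w) (hp0 : 0 < p) {x y : ℝ}
    (hx : 0 ≤ x) (hxy : x ≤ y) (hyT : y ≤ T) : ‖S y - S x‖ ≤ w x y ^ (1 / p) :=
  rpow_invert hp0 (norm_nonneg _) (H.domS hx hxy hyT)

lemma SatisfiesRIE.S_le_B (H : SatisfiesRIE d p T π S II w) (hp0 : 0 < p) {x y : ℝ}
    (hx : 0 ≤ x) (hxy : x ≤ y) (hyT : y ≤ T) : ‖S y - S x‖ ≤ w 0 T ^ (1 / p) := by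
  refine (H.S_le_w hp0 hx hxy hyT).trans ?_
  exact Real.rpow_le_rpow (H.control.1 hx hxy hyT)
    (H.control.mono le_rfl hx hxy hyT le_rfl) (by positivity)

lemma SatisfiesRIE.errAndMesh (H : SatisfiesRIE d p T π S II w) {η δ : ℝ}
    (hη : 0 < η) (hδ : 0 < δ) :
    ∃ m, (∀ u ∈ Icc (0:ℝ) T, ‖riemannSum π S m u - II u‖ < η) ∧
      (∀ k < π.N m, π.t m (k + 1) - π.t m k < δ) := by
  have h1 := (Metric.tendstoUniformlyOn_iff.1 H.riemannUnif) η hη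
  rw [eventually_atTop] at h1
  obtain ⟨M₁, hM₁⟩ := h1
  obtain ⟨M₂, hM₂⟩ := π.mesh δ hδ
  refine ⟨max M₁ M₂, ?_, ?_⟩
  · intro u hu
    have := hM₁ (max M₁ M₂) (le_max_left _ _) u hu
    rwa [dist_comm, dist_eq_norm] at this
  · exact hM₂ (max M₁ M₂) (le_max_right _ _)

lemma SatisfiesRIE.tendsto_riemann (H : SatisfiesRIE d p T π S II w) {u : ℝ}
    (hu : u ∈ Icc (0:ℝ) T) :
    Tendsto (fun m => riemannSum π S m u) atTop (𝓝 (II u)) :=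
  H.riemannUnif.tendsto_at hu

lemma SatisfiesRIE.pointBound (H : SatisfiesRIE d p T π S II w) (hp0 : 0 < p)
    {u v : ℝ} (hu : u ∈ π.points) (hv : v ∈ π.points) (huv : u < v) :
    ‖roughA S II u v‖ ≤ w u v ^ (2 / p) := by
  obtain ⟨n, k, hk, hku⟩ := hu
  obtain ⟨n', k', hk', hkv⟩ := hv
  have huIcc : u ∈ Icc (0:ℝ) T := by rw [← hku]; exact π.t_mem hk
  have hvIcc : v ∈ Icc (0:ℝ) T := by rw [← hkv]; exact π.t_mem hk'
  have key : ∀ m ≥ max n n',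
      ‖(riemannSum π S m v - riemannSum π S m u) - tensor (S u) (S v - S u)‖
        ≤ w u v ^ (2 / p) := by
    intro m hm
    obtain ⟨a, ha, hta⟩ := π.nested_trans (le_trans (le_max_left n n') hm) hk
    obtain ⟨b, hb, htb⟩ := π.nested_trans (le_trans (le_max_right n n') hm) hk'
    rw [hku] at hta
    rw [hkv] at htb
    have hab : a < b := by
      by_contra hab
      push_neg at hab
      have := π.t_mono hab ha
      rw [hta, htb] at this
      linarith
    have hdiff : riemannSum π S m v - riemannSum π S m u = riemannBetween π S m a b := by
      rw [← hta, ← htb, riemannSum_at_point π S ha, riemannSum_at_point π S hb,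
        ← riemannBetween_split π S (le_of_lt hab)]
      abel
    rw [hdiff]
    have hdom := H.domA m hab hb
    rw [hta, htb] at hdom
    have h1 : ‖riemannBetween π S m a b - tensor (S u) (S v - S u)‖
        ≤ (w u v) ^ (1 / (p / 2)) :=
      rpow_invert (by linarith) (norm_nonneg _) hdom
    rwa [one_div_div] at h1
  have hlim : Tendsto
      (fun m => ‖(riemannSum π S m v - riemannSum π S m u) - tensor (S u) (S v - S u)‖)
      atTop (𝓝 ‖(II v - II u) - tensor (S u) (S v - S u)‖) :=
    (((H.tendsto_riemann hvIcc).sub (H.tendsto_riemann huIcc)).sub tendsto_const_nhds).norm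
  have := le_of_tendsto hlim (eventually_atTop.2 ⟨max n n', key⟩)
  exact this

end Main
section Main2
variable {d : ℕ} {p T : ℝ} {π : PartitionSeq T} {S : ℝ → Vec d} {II : ℝ → Mat d}
  {w : ℝ → ℝ → ℝ}

lemma SatisfiesRIE.A_bound_point (H : SatisfiesRIE d p T π S II w) (hp2 : 2 < p)
    {s v : ℝ} (hs : 0 ≤ s) (hsv : s < v) (hv : v ∈ π.points) :
    ‖roughA S II s v‖ ≤ w s v ^ (2 / p) := by
  have hp0 : 0 < p := by linarith
  have hvT : v ≤ T := by obtain ⟨nv, kv, hkv, hkveq⟩ := hv; rw [← hkveq]; exact (π.t_mem hkv).2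
  have hsT : s < T := lt_of_lt_of_le hsv hvT
  set B := w 0 T ^ (1 / p) with hBdef
  have hB0 : 0 ≤ B := Real.rpow_nonneg (H.control.1 le_rfl (hs.trans hsT.le) le_rfl) _
  refine le_of_forall_pos_le_add ?_
  intro η hη
  obtain ⟨m, herr, -⟩ := H.errAndMesh (show (0:ℝ) < η/8 by linarith) one_pos
  obtain ⟨j, hjN, hjs, hsj⟩ := π.exists_index_right (n := m) hs hsT
  set M := ‖S (π.t m j) - S s‖ with hMdef
  have hM0 : 0 ≤ M := norm_nonneg _
  set η' := η / (2 * (M + B + 1)) with hη'def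
  have hη' : 0 < η' := by positivity
  have hrc := H.cadlag.1 s ⟨hs, hsT⟩
  rw [Metric.tendsto_nhdsWithin_nhds] at hrc
  obtain ⟨δ, hδ, hδS⟩ := hrc η' hη'
  set b := min (min (s + δ) (π.t m (j + 1))) v with hbdef
  have hsb : s < b := lt_min (lt_min (by linarith) hsj) hsv
  have hbT : b ≤ T := le_trans (min_le_right _ _) hvT
  obtain ⟨n₂, k₂, hk₂, hsu, hub⟩ := π.exists_point_between hs hsb hbT
  set u := π.t n₂ k₂ with hudef
  have hupt : u ∈ π.points := ⟨n₂, k₂, hk₂, rfl⟩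
  have huδ : u < s + δ := lt_of_lt_of_le hub (le_trans (min_le_left _ _) (min_le_left _ _))
  have huj : u ≤ π.t m (j + 1) :=
    le_of_lt (lt_of_lt_of_le hub (le_trans (min_le_left _ _) (min_le_right _ _)))
  have huv : u < v := lt_of_lt_of_le hub (min_le_right _ _)
  have huT : u ≤ T := le_trans (le_of_lt huv) hvT
  have huIcc : u ∈ Icc (0:ℝ) T := ⟨le_trans hs (le_of_lt hsu), huT⟩
  have hsIcc : s ∈ Icc (0:ℝ) T := ⟨hs, le_of_lt hsT⟩
  -- the three pieces from Chen's relation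
  have hchen := roughA_chen S II s u v
  -- piece 1 : roughA s u is small
  have hgloc : riemannSum π S m u - riemannSum π S m s = tensor (S (π.t m j)) (S u - S s) :=
    riemannSum_local π S hjN hjs (le_of_lt hsu) huj
  have hAsu : roughA S II s u
      = (II u - riemannSum π S m u) - (II s - riemannSum π S m s)
        + tensor (S (π.t m j) - S s) (S u - S s) := by
    unfold roughA
    rw [tensor_sub_left', ← hgloc]
    abel
  have hSus : ‖S u - S s‖ < η' := by
    have := hδS (mem_Ioi.2 hsu) (by rw [Real.dist_eq, abs_of_pos (by linarith)]; linarith)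
    rwa [dist_eq_norm] at this
  have hAsu_norm : ‖roughA S II s u‖ ≤ η/8 + η/8 + M * η' := by
    rw [hAsu]
    refine le_trans (norm_add_le _ _) ?_
    gcongr
    · refine le_trans (norm_sub_le _ _) ?_
      gcongr
      · rw [norm_sub_rev]; exact le_of_lt (herr u huIcc)
      · rw [norm_sub_rev]; exact le_of_lt (herr s hsIcc)
    · rw [norm_tensor]
      exact mul_le_mul le_rfl (le_of_lt hSus) (norm_nonneg _) hM0
  -- piece 2 : roughA u v
  have hAuv : ‖roughA S II u v‖ ≤ w s v ^ (2 / p) := by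
    refine le_trans (H.pointBound hp0 hupt hv huv) ?_
    exact Real.rpow_le_rpow (H.control.1 (le_trans hs (le_of_lt hsu)) (le_of_lt huv) hvT)
      (H.control.mono hs (le_of_lt hsu) (le_of_lt huv) le_rfl hvT) (by positivity)
  -- piece 3 : tensor term
  have htens : ‖tensor (S u - S s) (S v - S u)‖ ≤ η' * B := by
    rw [norm_tensor]
    exact mul_le_mul (le_of_lt hSus)
      (H.S_le_B hp0 (le_trans hs (le_of_lt hsu)) (le_of_lt huv) hvT) (norm_nonneg _) (le_of_lt hη')
  -- combine
  have hbudget : (M + B) * η' ≤ η / 2 := by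
    rw [hη'def, mul_comm, div_mul_eq_mul_div, div_le_div_iff₀ (by positivity) (by norm_num)]
    nlinarith [hM0, hB0, le_of_lt hη]
  calc ‖roughA S II s v‖
      ≤ ‖roughA S II s u‖ + ‖roughA S II u v‖ + ‖tensor (S u - S s) (S v - S u)‖ := by
        rw [hchen]; exact le_trans (norm_add_le _ _) (by gcongr; exact norm_add_le _ _)
    _ ≤ (η/8 + η/8 + M * η') + w s v ^ (2/p) + η' * B := by gcongr
    _ ≤ w s v ^ (2/p) + η := by nlinarith [hbudget]

lemma SatisfiesRIE.II_rightCont (H : SatisfiesRIE d p T π S II w)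
    {t : ℝ} (ht0 : 0 ≤ t) (htT : t < T) : Tendsto II (𝓝[>] t) (𝓝 (II t)) := by
  rw [Metric.tendsto_nhdsWithin_nhds]
  intro η hη
  obtain ⟨m, herr, -⟩ := H.errAndMesh (show (0:ℝ) < η/8 by linarith) one_pos
  obtain ⟨j, hjN, hjt, htj⟩ := π.exists_index_right (n := m) ht0 htT
  set M := ‖S (π.t m j)‖ with hMdef
  have hM0 : 0 ≤ M := norm_nonneg _
  set η' := η / (2 * (M + 1)) with hη'def
  have hη' : 0 < η' := by positivity
  have hrc := H.cadlag.1 t ⟨ht0, htT⟩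
  rw [Metric.tendsto_nhdsWithin_nhds] at hrc
  obtain ⟨δS, hδS, hδS'⟩ := hrc η' hη'
  refine ⟨min δS (π.t m (j + 1) - t), lt_min hδS (by linarith), ?_⟩
  intro x hx hdist
  have hxt : t < x := hx
  rw [Real.dist_eq, abs_of_pos (by linarith)] at hdist
  have hx1 : x ≤ π.t m (j + 1) := by
    have := lt_of_lt_of_le hdist (min_le_right _ _)
    linarith
  have hxT : x ≤ T := le_trans hx1 (π.t_mem (by omega)).2
  have htIcc : t ∈ Icc (0:ℝ) T := ⟨ht0, le_of_lt htT⟩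
  have hxIcc : x ∈ Icc (0:ℝ) T := ⟨by linarith, hxT⟩
  have hloc : riemannSum π S m x - riemannSum π S m t = tensor (S (π.t m j)) (S x - S t) :=
    riemannSum_local π S hjN hjt (le_of_lt hxt) hx1
  have hid : II x - II t
      = (II x - riemannSum π S m x) - (II t - riemannSum π S m t)
        + tensor (S (π.t m j)) (S x - S t) := by
    rw [← hloc]; abel
  have hSxt : ‖S x - S t‖ < η' := by
    have := hδS' (mem_Ioi.2 hxt)
      (by rw [Real.dist_eq, abs_of_pos (by linarith)]; exact lt_of_lt_of_le hdist (min_le_left _ _))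
    rwa [dist_eq_norm] at this
  rw [dist_eq_norm, hid]
  have h1 : ‖(II x - riemannSum π S m x) - (II t - riemannSum π S m t)‖ ≤ η/8 + η/8 := by
    refine le_trans (norm_sub_le _ _) ?_
    gcongr
    · rw [norm_sub_rev]; exact le_of_lt (herr x hxIcc)
    · rw [norm_sub_rev]; exact le_of_lt (herr t htIcc)
  have h2 : ‖tensor (S (π.t m j)) (S x - S t)‖ ≤ M * η' := by
    rw [norm_tensor]
    exact mul_le_mul le_rfl (le_of_lt hSxt) (norm_nonneg _) hM0
  have h3 : M * η' ≤ η / 2 := by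
    rw [hη'def, mul_comm, div_mul_eq_mul_div, div_le_div_iff₀ (by positivity) (by norm_num)]
    nlinarith [hM0, le_of_lt hη]
  calc ‖(II x - riemannSum π S m x) - (II t - riemannSum π S m t)
        + tensor (S (π.t m j)) (S x - S t)‖
      ≤ (η/8 + η/8) + M * η' := le_trans (norm_add_le _ _) (by gcongr)
    _ < η := by linarith

lemma SatisfiesRIE.II_leftLim (H : SatisfiesRIE d p T π S II w)
    {t : ℝ} (ht0 : 0 < t) (htT : t ≤ T) : ∃ L, Tendsto II (𝓝[<] t) (𝓝 L) := by
  obtain ⟨Sl, hSl⟩ := H.cadlag.2 t ⟨ht0, htT⟩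
  refine ⟨II t - tensor Sl (S t - Sl), ?_⟩
  rw [Metric.tendsto_nhdsWithin_nhds]
  intro η hη
  set C1 := ‖S t - Sl‖ with hC1def
  set C2 := ‖Sl‖ + 1 with hC2def
  have hC10 : 0 ≤ C1 := norm_nonneg _
  have hC20 : 0 < C2 := by positivity
  set η' := min 1 (η / (4 * (C1 + C2 + 1))) with hη'def
  have hη' : 0 < η' := lt_min one_pos (by positivity)
  rw [Metric.tendsto_nhdsWithin_nhds] at hSl
  obtain ⟨δ₀, hδ₀, hδ₀'⟩ := hSl η' hη'
  obtain ⟨m, herr, hmesh⟩ := H.errAndMesh (show (0:ℝ) < η/8 by linarith) hδ₀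
  obtain ⟨j, hjN, hjt, htj⟩ := π.exists_index_left (n := m) ht0 htT
  have hjδ : t - π.t m j < δ₀ := by
    have := hmesh j hjN
    linarith
  refine ⟨t - π.t m j, by linarith, ?_⟩
  intro x hx hdist
  have hxt : x < t := hx
  rw [Real.dist_eq, abs_of_neg (by linarith)] at hdist
  have hx_gt : π.t m j < x := by linarith
  have hx0 : 0 ≤ x := le_trans (π.t_mem (by omega : j ≤ π.N m)).1 (le_of_lt hx_gt)
  have hxIcc : x ∈ Icc (0:ℝ) T := ⟨hx0, le_trans (le_of_lt hxt) htT⟩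
  have htIcc : t ∈ Icc (0:ℝ) T := ⟨le_of_lt ht0, htT⟩
  have hloc : riemannSum π S m t - riemannSum π S m x = tensor (S (π.t m j)) (S t - S x) :=
    riemannSum_local π S hjN (le_of_lt hx_gt) (le_of_lt hxt) htj
  have hid : II x - (II t - tensor Sl (S t - Sl))
      = (II x - riemannSum π S m x) - (II t - riemannSum π S m t)
        + (tensor (Sl - S (π.t m j)) (S t - Sl) + tensor (S (π.t m j)) (S x - Sl)) := by
    rw [tensor_sub_left', tensor_sub_right' (S (π.t m j)) (S x) Sl]
    have hx' : tensor (S (π.t m j)) (S x)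
        = tensor (S (π.t m j)) (S t) - tensor (S (π.t m j)) (S t - S x) := by
      rw [tensor_sub_right']; abel
    rw [hx', ← hloc, tensor_sub_right' Sl (S t) Sl, tensor_sub_right' (S (π.t m j)) (S t) Sl]
    abel
  have hSj : ‖S (π.t m j) - Sl‖ < η' := by
    have := hδ₀' (mem_Iio.2 hjt)
      (by rw [Real.dist_eq, abs_of_neg (by linarith)]; linarith)
    rwa [dist_eq_norm] at this
  have hSx : ‖S x - Sl‖ < η' := by
    have := hδ₀' (mem_Iio.2 hxt)
      (by rw [Real.dist_eq, abs_of_neg (by linarith)]; linarith)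
    rwa [dist_eq_norm] at this
  have hC2bound : ‖S (π.t m j)‖ ≤ C2 := by
    have h := norm_add_le (S (π.t m j) - Sl) Sl
    rw [sub_add_cancel] at h
    have hle1 : η' ≤ 1 := min_le_left _ _
    calc ‖S (π.t m j)‖ ≤ ‖S (π.t m j) - Sl‖ + ‖Sl‖ := h
      _ ≤ 1 + ‖Sl‖ := by gcongr; exact le_of_lt (lt_of_lt_of_le hSj hle1)
      _ = C2 := by rw [hC2def]; ring
  rw [dist_eq_norm, hid]
  have h1 : ‖(II x - riemannSum π S m x) - (II t - riemannSum π S m t)‖ ≤ η/8 + η/8 := by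
    refine le_trans (norm_sub_le _ _) ?_
    gcongr
    · rw [norm_sub_rev]; exact le_of_lt (herr x hxIcc)
    · rw [norm_sub_rev]; exact le_of_lt (herr t htIcc)
  have h2 : ‖tensor (Sl - S (π.t m j)) (S t - Sl) + tensor (S (π.t m j)) (S x - Sl)‖
      ≤ η' * C1 + C2 * η' := by
    refine le_trans (norm_add_le _ _) ?_
    gcongr
    · rw [norm_tensor]
      refine mul_le_mul ?_ le_rfl hC10 (le_of_lt hη')
      rw [norm_sub_rev]; exact le_of_lt hSj
    · rw [norm_tensor]
      exact mul_le_mul hC2bound (le_of_lt hSx) (norm_nonneg _) (le_of_lt hC20)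
  have h3 : η' * C1 + C2 * η' ≤ η / 2 := by
    have hle : η' ≤ η / (4 * (C1 + C2 + 1)) := min_le_right _ _
    have : η' * (C1 + C2) ≤ η / (4 * (C1 + C2 + 1)) * (C1 + C2) := by
      exact mul_le_mul_of_nonneg_right hle (by positivity)
    have h4 : η / (4 * (C1 + C2 + 1)) * (C1 + C2) ≤ η / 4 := by
      rw [div_mul_eq_mul_div, div_le_div_iff₀ (by positivity) (by norm_num)]
      nlinarith [le_of_lt hη, hC10, le_of_lt hC20]
    nlinarith
  calc ‖(II x - riemannSum π S m x) - (II t - riemannSum π S m t)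
        + (tensor (Sl - S (π.t m j)) (S t - Sl) + tensor (S (π.t m j)) (S x - Sl))‖
      ≤ (η/8 + η/8) + (η' * C1 + C2 * η') := le_trans (norm_add_le _ _) (by gcongr)
    _ < η := by linarith

end Main2
section Main3
variable {d : ℕ} {p T : ℝ} {π : PartitionSeq T} {S : ℝ → Vec d} {II : ℝ → Mat d}
  {w : ℝ → ℝ → ℝ}

lemma SatisfiesRIE.A_bound (H : SatisfiesRIE d p T π S II w) (hp2 : 2 < p)
    {s t : ℝ} (hs : 0 ≤ s) (hst : s < t) (htT : t ≤ T) :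
    ‖roughA S II s t‖ ≤ 2 * w s t ^ (2 / p) := by
  have hp0 : 0 < p := by linarith
  have hwst : 0 ≤ w s t := H.control.1 hs (le_of_lt hst) htT
  have hw_nn : 0 ≤ w s t ^ (2 / p) := Real.rpow_nonneg hwst _
  by_cases hpt : t ∈ π.points
  · linarith [H.A_bound_point hp2 hs hst hpt]
  have ht0 : 0 < t := lt_of_le_of_lt hs hst
  refine le_of_forall_pos_le_add ?_
  intro η hη
  obtain ⟨Sl, hSl⟩ := H.cadlag.2 t ⟨ht0, htT⟩
  set B := w 0 T ^ (1 / p) with hBdef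
  have hB0 : 0 ≤ B := Real.rpow_nonneg (H.control.1 le_rfl (ht0.le.trans htT) le_rfl) _
  set η' := η / (4 * (B + 1)) with hη'def
  have hη' : 0 < η' := by positivity
  rw [Metric.tendsto_nhdsWithin_nhds] at hSl
  obtain ⟨δ₀, hδ₀, hδ₀'⟩ := hSl η' hη'
  obtain ⟨m, herr, hmesh⟩ := H.errAndMesh (show (0:ℝ) < η/8 by linarith) hδ₀
  obtain ⟨j, hjN, hjt, htj⟩ := π.exists_index_left (n := m) ht0 htT
  have hjδ : t - π.t m j < δ₀ := by
    have := hmesh j hjN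
    linarith
  set a := max (π.t m j) s with hadef
  have ha0 : 0 ≤ a := le_trans hs (le_max_right _ _)
  have hat : a < t := max_lt hjt hst
  obtain ⟨nv, kv, hkv, hav, hvt⟩ := π.exists_point_between ha0 hat htT
  set v := π.t nv kv with hvdef
  have hvpt : v ∈ π.points := ⟨nv, kv, hkv, rfl⟩
  have hjv : π.t m j < v := lt_of_le_of_lt (le_max_left _ _) hav
  have hsv : s < v := lt_of_le_of_lt (le_max_right _ _) hav
  have hv0 : 0 ≤ v := le_trans hs (le_of_lt hsv)
  have hvIcc : v ∈ Icc (0:ℝ) T := ⟨hv0, le_trans (le_of_lt hvt) htT⟩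
  have htIcc : t ∈ Icc (0:ℝ) T := ⟨le_of_lt ht0, htT⟩
  have hwsv : 0 ≤ w s v := H.control.1 hs (le_of_lt hsv) (le_trans (le_of_lt hvt) htT)
  have hwvt : 0 ≤ w v t := H.control.1 hv0 (le_of_lt hvt) htT
  -- piece 1 : roughA s v
  have hAsv : ‖roughA S II s v‖ ≤ w s t ^ (2 / p) := by
    refine le_trans (H.A_bound_point hp2 hs hsv hvpt) ?_
    exact Real.rpow_le_rpow hwsv
      (H.control.mono hs le_rfl (le_of_lt hsv) (le_of_lt hvt) htT) (by positivity)
  -- piece 2 : roughA v t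
  have hloc : riemannSum π S m t - riemannSum π S m v = tensor (S (π.t m j)) (S t - S v) :=
    riemannSum_local π S hjN (le_of_lt hjv) (le_of_lt hvt) htj
  have hAvt : roughA S II v t
      = (II t - riemannSum π S m t) - (II v - riemannSum π S m v)
        + tensor (S (π.t m j) - S v) (S t - S v) := by
    unfold roughA
    rw [tensor_sub_left', ← hloc]
    abel
  have hSjSl : ‖S (π.t m j) - Sl‖ < η' := by
    have := hδ₀' (mem_Iio.2 hjt)
      (by rw [Real.dist_eq, abs_of_neg (by linarith)]; linarith)
    rwa [dist_eq_norm] at this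
  have hSvSl : ‖S v - Sl‖ < η' := by
    have := hδ₀' (mem_Iio.2 hvt)
      (by rw [Real.dist_eq, abs_of_neg (by linarith)]; linarith)
    rwa [dist_eq_norm] at this
  have hSjv : ‖S (π.t m j) - S v‖ ≤ 2 * η' := by
    have h := norm_sub_le (S (π.t m j) - Sl) (S v - Sl)
    rw [sub_sub_sub_cancel_right] at h
    linarith
  have hStv : ‖S t - S v‖ ≤ B := H.S_le_B hp0 hv0 (le_of_lt hvt) htT
  have hAvt_norm : ‖roughA S II v t‖ ≤ η/8 + η/8 + 2 * η' * B := by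
    rw [hAvt]
    refine le_trans (norm_add_le _ _) ?_
    gcongr
    · refine le_trans (norm_sub_le _ _) ?_
      gcongr
      · rw [norm_sub_rev]; exact le_of_lt (herr t htIcc)
      · rw [norm_sub_rev]; exact le_of_lt (herr v hvIcc)
    · rw [norm_tensor]
      exact mul_le_mul hSjv hStv (norm_nonneg _) (by positivity)
  -- piece 3 : tensor term
  have h1p : ‖S v - S s‖ ≤ w s t ^ (1 / p) := by
    refine le_trans (H.S_le_w hp0 hs (le_of_lt hsv) (le_trans (le_of_lt hvt) htT)) ?_
    exact Real.rpow_le_rpow hwsv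
      (H.control.mono hs le_rfl (le_of_lt hsv) (le_of_lt hvt) htT) (by positivity)
  have h2p : ‖S t - S v‖ ≤ w s t ^ (1 / p) := by
    refine le_trans (H.S_le_w hp0 hv0 (le_of_lt hvt) htT) ?_
    exact Real.rpow_le_rpow hwvt
      (H.control.mono hs (le_of_lt hsv) (le_of_lt hvt) le_rfl htT) (by positivity)
  have htens : ‖tensor (S v - S s) (S t - S v)‖ ≤ w s t ^ (2 / p) := by
    rw [norm_tensor]
    calc ‖S v - S s‖ * ‖S t - S v‖
        ≤ w s t ^ (1/p) * w s t ^ (1/p) :=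
          mul_le_mul h1p h2p (norm_nonneg _) (by positivity)
      _ = w s t ^ (2/p) := by
          rw [← Real.rpow_add' hwst (by positivity)]
          norm_num
          ring_nf
  -- budget
  have hbudget : 2 * η' * B ≤ η / 2 := by
    have h4 : 2 * η' * (B + 1) = η / 2 := by
      rw [hη'def]; field_simp; ring
    nlinarith [le_of_lt hη', hB0]
  calc ‖roughA S II s t‖
      ≤ ‖roughA S II s v‖ + ‖roughA S II v t‖ + ‖tensor (S v - S s) (S t - S v)‖ := by
        rw [roughA_chen S II s v t]
        exact le_trans (norm_add_le _ _) (by gcongr; exact norm_add_le _ _)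
    _ ≤ w s t ^ (2/p) + (η/8 + η/8 + 2 * η' * B) + w s t ^ (2/p) := by gcongr
    _ ≤ 2 * w s t ^ (2/p) + η := by linarith

end Main3
section AuxIP
variable {s t : ℝ}

lemma IntervalPartition.mono' (P : IntervalPartition s t) :
    ∀ {k l : ℕ}, k ≤ l → l ≤ P.N → P.τ k ≤ P.τ l := by
  intro k l
  induction l with
  | zero =>
    intro hkl _
    have : k = 0 := by omega
    simp [this]
  | succ m ih =>
    intro hkl hl
    rcases Nat.lt_or_ge k (m + 1) with h | h
    · exact le_trans (ih (by omega) (by omega)) (le_of_lt (P.mono m (by omega)))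
    · have : k = m + 1 := by omega
      simp [this]

lemma IntervalPartition.mem_Icc' (P : IntervalPartition s t) {k : ℕ} (hk : k ≤ P.N) :
    P.τ k ∈ Icc s t := by
  constructor
  · have := P.mono' (Nat.zero_le k) hk
    rwa [P.first] at this
  · have := P.mono' hk (le_refl _)
    rwa [P.last] at this

lemma sum_w_le {T : ℝ} {w : ℝ → ℝ → ℝ} (hw : IsControl T w) (hT : 0 ≤ T)
    (P : IntervalPartition 0 T) :
    ∑ k ∈ Finset.range P.N, w (P.τ k) (P.τ (k + 1)) ≤ w 0 T := by
  have key : ∀ j ≤ P.N, ∑ k ∈ Finset.range j, w (P.τ k) (P.τ (k + 1)) ≤ w (P.τ 0) (P.τ j) := by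
    intro j
    induction j with
    | zero =>
      intro _
      simp only [Finset.range_zero, Finset.sum_empty]
      exact hw.1 (by rw [P.first]) le_rfl (P.mem_Icc' (Nat.zero_le _)).2
    | succ m ih =>
      intro hm
      rw [Finset.sum_range_succ]
      have h1 := ih (by omega)
      have h2 := hw.2 (by rw [P.first] : (0:ℝ) ≤ P.τ 0) (P.mono' (Nat.zero_le m) (by omega))
        (le_of_lt (P.mono m (by omega))) (P.mem_Icc' hm).2
      linarith
  have := key P.N le_rfl
  rwa [P.first, P.last] at this

end AuxIP

theorem RIE_gives_rough_path'
    (p : ℝ) (hp : 2 < p) (hp' : p < 3) :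
    ∃ C : ℝ, 0 < C ∧
      ∀ (d : ℕ) (T : ℝ), 0 < T →
      ∀ (π : PartitionSeq T) (S : ℝ → Vec d) (II : ℝ → Mat d) (w : ℝ → ℝ → ℝ),
        SatisfiesRIE d p T π S II w →
        IsRoughPath d p T S S (roughA S II) ∧
        pVar (p / 2) (roughA S II) 0 T ≤ C * w 0 T ^ (2 / p) := by
  refine ⟨2, by norm_num, ?_⟩
  intro d T hT π S II w H
  have hp0 : 0 < p := by linarith
  have hwnn : 0 ≤ w 0 T := H.control.1 le_rfl hT.le le_rfl
  -- p-variation of S is bounded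
  have hvarS : HasBddPVar p (inc S) 0 T := by
    refine ⟨w 0 T, ?_⟩
    rintro x ⟨P, rfl⟩
    unfold varSumOn
    refine le_trans (Finset.sum_le_sum ?_) (sum_w_le H.control hT.le P)
    intro k hk
    rw [Finset.mem_range] at hk
    exact H.domS (P.mem_Icc' (by omega : k ≤ P.N)).1 (le_of_lt (P.mono k hk))
      (P.mem_Icc' (by omega : k + 1 ≤ P.N)).2
  -- p/2-variation sums of A are bounded
  have key : ∀ P : IntervalPartition 0 T,
      varSumOn (p / 2) (roughA S II) P ≤ 2 ^ (p / 2) * w 0 T := by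
    intro P
    unfold varSumOn
    have step1 : ∀ k ∈ Finset.range P.N,
        ‖roughA S II (P.τ k) (P.τ (k + 1))‖ ^ (p / 2)
          ≤ 2 ^ (p / 2) * w (P.τ k) (P.τ (k + 1)) := by
      intro k hk
      rw [Finset.mem_range] at hk
      have h0k : (0:ℝ) ≤ P.τ k := (P.mem_Icc' (by omega : k ≤ P.N)).1
      have hkk : P.τ k < P.τ (k + 1) := P.mono k hk
      have hk1T : P.τ (k + 1) ≤ T := (P.mem_Icc' (by omega : k + 1 ≤ P.N)).2
      have hwk : 0 ≤ w (P.τ k) (P.τ (k + 1)) := H.control.1 h0k hkk.le hk1T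
      calc ‖roughA S II (P.τ k) (P.τ (k + 1))‖ ^ (p / 2)
          ≤ (2 * w (P.τ k) (P.τ (k + 1)) ^ (2 / p)) ^ (p / 2) :=
            Real.rpow_le_rpow (norm_nonneg _) (H.A_bound hp h0k hkk hk1T) (by positivity)
        _ = 2 ^ (p / 2) * w (P.τ k) (P.τ (k + 1)) := by
            rw [Real.mul_rpow (by norm_num) (Real.rpow_nonneg hwk _),
              ← Real.rpow_mul hwk, show 2 / p * (p / 2) = 1 by field_simp, Real.rpow_one]
    calc ∑ k ∈ Finset.range P.N, ‖roughA S II (P.τ k) (P.τ (k + 1))‖ ^ (p / 2)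
        ≤ ∑ k ∈ Finset.range P.N, 2 ^ (p / 2) * w (P.τ k) (P.τ (k + 1)) :=
          Finset.sum_le_sum step1
      _ = 2 ^ (p / 2) * ∑ k ∈ Finset.range P.N, w (P.τ k) (P.τ (k + 1)) := by
          rw [Finset.mul_sum]
      _ ≤ 2 ^ (p / 2) * w 0 T := by
          exact mul_le_mul_of_nonneg_left (sum_w_le H.control hT.le P) (by positivity)
  have hbddA : HasBddPVar (p / 2) (roughA S II) 0 T :=
    ⟨2 ^ (p / 2) * w 0 T, by rintro x ⟨P, rfl⟩; exact key P⟩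
  have hsup : sSup (pVarSums (p / 2) (roughA S II) 0 T) ≤ 2 ^ (p / 2) * w 0 T :=
    Real.sSup_le (by rintro x ⟨P, rfl⟩; exact key P) (by positivity)
  have hsup0 : 0 ≤ sSup (pVarSums (p / 2) (roughA S II) 0 T) := by
    refine Real.sSup_nonneg ?_
    rintro x ⟨P, rfl⟩
    exact Finset.sum_nonneg fun k _ => Real.rpow_nonneg (norm_nonneg _) _
  have hpvar : pVar (p / 2) (roughA S II) 0 T ≤ 2 * w 0 T ^ (2 / p) := by
    unfold pVar
    rw [show (1:ℝ) / (p / 2) = 2 / p by rw [one_div_div]]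
    calc sSup (pVarSums (p / 2) (roughA S II) 0 T) ^ (2 / p)
        ≤ (2 ^ (p / 2) * w 0 T) ^ (2 / p) :=
          Real.rpow_le_rpow hsup0 hsup (by positivity)
      _ = 2 * w 0 T ^ (2 / p) := by
          rw [Real.mul_rpow (by positivity) hwnn, ← Real.rpow_mul (by norm_num : (0:ℝ) ≤ 2),
            show p / 2 * (2 / p) = 1 by field_simp, Real.rpow_one]
  refine ⟨⟨H.cadlag, H.cadlag, hvarS, hvarS, ?_, ?_, hbddA, ?_⟩, hpvar⟩
  · -- cadlagXX₁
    intro t ht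
    constructor
    · intro u hu
      have huT : u < T := lt_of_lt_of_le hu.2 ht.2
      have hIIrc := H.II_rightCont hu.1 huT
      have hSrc := H.cadlag.1 u ⟨hu.1, huT⟩
      exact (tendsto_const_nhds.sub hIIrc).sub
        (tendsto_tensor hSrc (tendsto_const_nhds.sub hSrc))
    · intro u hu
      have huT : u ≤ T := hu.2.trans ht.2
      obtain ⟨LII, hLII⟩ := H.II_leftLim hu.1 huT
      obtain ⟨Sl, hSl⟩ := H.cadlag.2 u ⟨hu.1, huT⟩
      exact ⟨II t - LII - tensor Sl (S t - Sl),
        (tendsto_const_nhds.sub hLII).sub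
          (tendsto_tensor hSl (tendsto_const_nhds.sub hSl))⟩
  · -- cadlagXX₂
    intro s hs
    constructor
    · intro u hu
      have hu0 : (0:ℝ) ≤ u := hs.1.trans hu.1
      have hIIrc := H.II_rightCont hu0 hu.2
      have hSrc := H.cadlag.1 u ⟨hu0, hu.2⟩
      exact (hIIrc.sub tendsto_const_nhds).sub
        (tendsto_tensor tendsto_const_nhds (hSrc.sub tendsto_const_nhds))
    · intro u hu
      have hu0 : (0:ℝ) < u := lt_of_le_of_lt hs.1 hu.1
      obtain ⟨LII, hLII⟩ := H.II_leftLim hu0 hu.2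
      obtain ⟨Sl, hSl⟩ := H.cadlag.2 u ⟨hu0, hu.2⟩
      exact ⟨LII - II s - tensor (S s) (Sl - S s),
        (hLII.sub tendsto_const_nhds).sub
          (tendsto_tensor tendsto_const_nhds (hSl.sub tendsto_const_nhds))⟩
  · -- Chen
    intro s u t _ _ _ _
    exact roughA_chen S II s u t

/-- **The canonical rough path lift under Property (RIE)** (Lemma 2.?).
If `S` satisfies Property (RIE) with respect to `p` and `(P^n)`, and
`A_{s,t} := ∫ₛᵗ S ⊗ dS − S_s ⊗ S_{s,t}`, then `S = (S, S, A)` is a càdlàg `p`-rough path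
(Chen's relation holds and `A` is càdlàg in each variable), and
`‖A‖_{p/2,[0,T]} ≤ C w(0,T)^{2/p} < ∞` with a constant `C` depending only on `p`. -/
theorem RIE_gives_rough_path
    (p : ℝ) (hp : 2 < p) (hp' : p < 3) :
    ∃ C : ℝ, 0 < C ∧
      ∀ (d : ℕ) (T : ℝ), 0 < T →
      ∀ (π : PartitionSeq T) (S : ℝ → Vec d) (II : ℝ → Mat d) (w : ℝ → ℝ → ℝ),
        SatisfiesRIE d p T π S II w →
        IsRoughPath d p T S S (roughA S II) ∧
        pVar (p / 2) (roughA S II) 0 T ≤ C * w 0 T ^ (2 / p) := by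
  exact RIE_gives_rough_path' p hp hp'
end
end

section
/- Let P^n = {0 = t^n_0 < t^n_1 < ⋯ < t^n_{N_n} = T}, n ∈ ℕ, be a nested sequence of partitions of [0,T] (P^n ⊆ P^{n+1}) with mesh |P^n| → 0, let F : [0,T] → ℝ^d be càdlàg with jump times J_F := {t ∈ (0,T] : F_{t−} ≠ F_t} satisfying J_F ⊆ ∪_{n∈ℕ} P^n, and define F^n_t := F_T·1_{{T}}(t) + Σ_{k=0}^{N_n−1} F_{t^n_k}·1_{[t^n_k,t^n_{k+1})}(t). Then the family {F^n : n ∈ ℕ} is equiregulated: for every t ∈ (0,T] and every ε > 0 there exists u ∈ [0,t) such that |F^n_s − F^n_{t−}| < ε for all s ∈ [u,t) and all n ∈ ℕ, and for every t ∈ [0,T) and every ε > 0 there exists v ∈ (t,T] such that |F^n_s − F^n_t| < ε for all s ∈ (t,v] and all n ∈ ℕ. -/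
open Set Filter MeasureTheory
open scoped Topology InnerProductSpace BigOperators

noncomputable section

section EquiregHelpers

variable {T : ℝ} (π : PartitionSeq T)

lemma PartitionSeq.t_lt {n k l : ℕ} (h : k < l) (hl : l ≤ π.N n) :
    π.t n k < π.t n l := by
  induction l with
  | zero => omega
  | succ m ih =>
    rcases Nat.lt_succ_iff_lt_or_eq.mp h with h' | h'
    · exact lt_trans (ih h' (by omega)) (π.mono n m (by omega))
    · subst h'; exact π.mono n k (by omega)

lemma PartitionSeq.t_le {n k l : ℕ} (h : k ≤ l) (hl : l ≤ π.N n) :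
    π.t n k ≤ π.t n l := by
  rcases eq_or_lt_of_le h with rfl | h'
  · exact le_refl _
  · exact (π.t_lt h' hl).le

lemma PartitionSeq.t_nonneg {n k : ℕ} (hk : k ≤ π.N n) : 0 ≤ π.t n k := by
  have := π.t_le (Nat.zero_le k) hk
  rwa [π.first] at this

lemma PartitionSeq.t_le_T {n k : ℕ} (hk : k ≤ π.N n) : π.t n k ≤ T := by
  have := π.t_le hk le_rfl
  rwa [π.last] at this

lemma PartitionSeq.disc_eval {E : Type*} [NormedAddCommGroup E] (F : ℝ → E) {n k : ℕ}
    (hk : k < π.N n) {u : ℝ} (hu : u ∈ Set.Ico (π.t n k) (π.t n (k + 1))) :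
    π.disc F n u = F (π.t n k) := by
  have huT : u < T := lt_of_lt_of_le hu.2 (π.t_le_T hk)
  unfold PartitionSeq.disc
  rw [Set.indicator_of_notMem (by simp [huT.ne] : u ∉ ({T} : Set ℝ))]
  rw [Finset.sum_eq_single k]
  · rw [Set.indicator_of_mem hu]; exact zero_add _
  · intro b hb hbk
    apply Set.indicator_of_notMem
    intro hub
    rcases lt_or_gt_of_ne hbk with h | h
    · exact absurd hu.1 (not_le.mpr (lt_of_lt_of_le hub.2 (π.t_le (by omega : b + 1 ≤ k) hk.le)))
    · exact absurd hub.1 (not_le.mpr (lt_of_lt_of_le hu.2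
        (π.t_le (by omega : k + 1 ≤ b) (Finset.mem_range.mp hb).le)))
  · intro hk'; exact absurd (Finset.mem_range.mpr hk) hk'

lemma PartitionSeq.disc_eval_T {E : Type*} [NormedAddCommGroup E] (F : ℝ → E) (n : ℕ) :
    π.disc F n T = F T := by
  unfold PartitionSeq.disc
  rw [Set.indicator_of_mem (Set.mem_singleton T) F, Finset.sum_eq_zero, add_zero]
  intro k hk
  apply Set.indicator_of_notMem
  intro hTk
  exact absurd hTk.2 (not_lt.mpr (π.t_le_T (Finset.mem_range.mp hk)))

lemma PartitionSeq.exists_interval (n : ℕ) {u : ℝ} (h0 : 0 ≤ u) (hT : u < T) :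
    ∃ k < π.N n, π.t n k ≤ u ∧ u < π.t n (k + 1) := by
  classical
  set P : ℕ → Prop := fun k => π.t n k ≤ u with hP
  have hP0 : P 0 := by rw [hP]; simpa [π.first n] using h0
  set k := Nat.findGreatest P (π.N n) with hkdef
  have hPk : P k := Nat.findGreatest_spec (Nat.zero_le _) hP0
  have hkle : k ≤ π.N n := Nat.findGreatest_le _
  have hkN : k < π.N n := by
    rcases eq_or_lt_of_le hkle with h | h
    · exfalso
      have hTk : π.t n k = T := by rw [h, π.last]
      rw [hP] at hPk; rw [hTk] at hPk
      exact absurd hT (not_lt.mpr hPk)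
    · exact h
  refine ⟨k, hkN, hPk, ?_⟩
  by_contra hcon
  push_neg at hcon
  exact Nat.findGreatest_is_greatest (Nat.lt_succ_self k) (by omega) hcon

lemma PartitionSeq.exists_interval' (n : ℕ) {u : ℝ} (h0 : 0 < u) (hT : u ≤ T) :
    ∃ j < π.N n, π.t n j < u ∧ u ≤ π.t n (j + 1) := by
  classical
  set P : ℕ → Prop := fun k => π.t n k < u with hP
  have hP0 : P 0 := by rw [hP]; simpa [π.first n] using h0
  set j := Nat.findGreatest P (π.N n) with hjdef
  have hPj : P j := Nat.findGreatest_spec (Nat.zero_le _) hP0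
  have hjle : j ≤ π.N n := Nat.findGreatest_le _
  have hjN : j < π.N n := by
    rcases eq_or_lt_of_le hjle with h | h
    · exfalso
      have hTj : π.t n j = T := by rw [h, π.last]
      rw [hP] at hPj; rw [hTj] at hPj
      exact absurd hT (not_le.mpr hPj)
    · exact h
  refine ⟨j, hjN, hPj, ?_⟩
  by_contra hcon
  push_neg at hcon
  exact Nat.findGreatest_is_greatest (Nat.lt_succ_self j) (by omega) hcon

lemma PartitionSeq.leftLim_disc {E : Type*} [NormedAddCommGroup E] (F : ℝ → E) {n j : ℕ}
    (hj : j < π.N n) {x : ℝ} (hjx : π.t n j < x) (hjx' : x ≤ π.t n (j + 1)) :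
    Function.leftLim (π.disc F n) x = F (π.t n j) := by
  apply leftLim_eq_of_tendsto
  have hev : (π.disc F n) =ᶠ[𝓝[<] x] (fun _ => F (π.t n j)) := by
    filter_upwards [Ioo_mem_nhdsLT hjx] with s hs
    exact π.disc_eval F hj ⟨hs.1.le, lt_of_lt_of_le hs.2 hjx'⟩
  exact Tendsto.congr' hev.symm tendsto_const_nhds

lemma PartitionSeq.mem_points_later {n m k : ℕ} (hk : k ≤ π.N n) (hnm : n ≤ m) :
    ∃ l ≤ π.N m, π.t m l = π.t n k := by
  induction m, hnm using Nat.le_induction with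
  | base => exact ⟨k, hk, rfl⟩
  | succ m hm ih =>
    obtain ⟨l, hl, hlt⟩ := ih
    obtain ⟨l', hl', hlt'⟩ := π.nested m l hl
    exact ⟨l', hl', by rw [hlt', hlt]⟩

end EquiregHelpers

/-- **Equiregularity of the discretizations** (Steps 1–3 of the proof of Proposition 2.?).
If the jump times of the càdlàg path `F` are contained in `∪_n P^n`, then the family
`{F^n : n ∈ ℕ}` of left-point discretizations is equiregulated. -/
theorem discretizations_equiregulated
    (d : ℕ) (T : ℝ) (hT : 0 < T) (π : PartitionSeq T) (F : ℝ → Vec d)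
    (hF : CadlagOn F 0 T) (hJ : jumpSet F T ⊆ π.points) :
    (∀ t ∈ Ioc (0 : ℝ) T, ∀ ε > (0 : ℝ), ∃ u ∈ Ico (0 : ℝ) t,
        ∀ s ∈ Ico u t, ∀ n : ℕ,
          ‖π.disc F n s - Function.leftLim (π.disc F n) t‖ < ε) ∧
    (∀ t ∈ Ico (0 : ℝ) T, ∀ ε > (0 : ℝ), ∃ v ∈ Ioc t T,
        ∀ s ∈ Ioc t v, ∀ n : ℕ,
          ‖π.disc F n s - π.disc F n t‖ < ε) := by
  constructor
  · -- left regularity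
    intro t ht ε hε
    obtain ⟨L, hL⟩ := hF.2 t ht
    obtain ⟨δ₂, hδ₂pos, hδ₂⟩ := Metric.tendsto_nhdsWithin_nhds.mp hL (ε/2) (by linarith)
    obtain ⟨M, hM⟩ := π.mesh (δ₂/2) (by linarith)
    have key : ∀ M₀ : ℕ, ∃ u, 0 ≤ u ∧ u < t ∧ ∀ n < M₀, ∀ s, u ≤ s → s < t →
        π.disc F n s = Function.leftLim (π.disc F n) t := by
      intro M₀
      induction M₀ with
      | zero =>
        exact ⟨t/2, by linarith [ht.1], by linarith [ht.1],
          fun n hn => absurd hn (Nat.not_lt_zero n)⟩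
      | succ m ih =>
        obtain ⟨u, hu0, hut, hukey⟩ := ih
        obtain ⟨j, hj, hj1, hj2⟩ := π.exists_interval' m ht.1 ht.2
        refine ⟨max u (π.t m j), le_trans hu0 (le_max_left _ _), max_lt hut hj1, ?_⟩
        intro n hn s hus hst
        rcases Nat.lt_succ_iff_lt_or_eq.mp hn with h | h
        · exact hukey n h s (le_trans (le_max_left _ _) hus) hst
        · subst h
          rw [π.leftLim_disc F hj hj1 hj2]
          exact π.disc_eval F hj ⟨le_trans (le_max_right _ _) hus, lt_of_lt_of_le hst hj2⟩
    obtain ⟨u, hu0, hut, hukey⟩ := key M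
    refine ⟨max u (t - δ₂/2), ⟨le_trans hu0 (le_max_left _ _), max_lt hut (by linarith)⟩, ?_⟩
    intro s hs n
    rcases lt_or_ge n M with hn | hn
    · rw [hukey n hn s (le_trans (le_max_left _ _) hs.1) hs.2, sub_self, norm_zero]
      exact hε
    · obtain ⟨j, hj, hj1, hj2⟩ := π.exists_interval' n ht.1 ht.2
      rw [π.leftLim_disc F hj hj1 hj2]
      have hs0 : 0 ≤ s := le_trans hu0 (le_trans (le_max_left _ _) hs.1)
      have hsT : s < T := lt_of_lt_of_le hs.2 ht.2
      obtain ⟨k, hk, hk1, hk2⟩ := π.exists_interval n hs0 hsT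
      rw [π.disc_eval F hk ⟨hk1, hk2⟩]
      have hmj := hM n hn j hj
      have hmk := hM n hn k hk
      have hsd : t - δ₂/2 ≤ s := le_trans (le_max_right _ _) hs.1
      have hkt : π.t n k < t := lt_of_le_of_lt hk1 hs.2
      have hdj : dist (F (π.t n j)) L < ε/2 := by
        apply hδ₂ (Set.mem_Iio.mpr hj1)
        rw [Real.dist_eq, abs_of_nonpos (by linarith)]
        linarith
      have hdk : dist (F (π.t n k)) L < ε/2 := by
        apply hδ₂ (Set.mem_Iio.mpr hkt)
        rw [Real.dist_eq, abs_of_nonpos (by linarith)]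
        linarith
      calc ‖F (π.t n k) - F (π.t n j)‖
          = dist (F (π.t n k)) (F (π.t n j)) := (dist_eq_norm _ _).symm
        _ ≤ dist (F (π.t n k)) L + dist L (F (π.t n j)) := dist_triangle _ _ _
        _ < ε := by rw [dist_comm L]; linarith
  · -- right regularity
    intro t ht ε hε
    obtain ⟨δ₁, hδ₁pos, hδ₁⟩ := Metric.tendsto_nhdsWithin_nhds.mp (hF.1 t ht) (ε/2) (by linarith)
    have step2 : ∃ M : ℕ, ∀ n ≥ M, dist (π.disc F n t) (F t) < ε/2 := by
      by_cases hpt : t ∈ π.points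
      · obtain ⟨m, i, hi, hti⟩ := hpt
        refine ⟨m, fun n hn => ?_⟩
        obtain ⟨l, hl, hlt⟩ := π.mem_points_later hi hn
        rw [hti] at hlt
        obtain ⟨k, hk, hk1, hk2⟩ := π.exists_interval n ht.1 ht.2
        have hkt : π.t n k = t := by
          have h1 : l ≤ k := by
            by_contra hc
            push_neg at hc
            have := π.t_le (by omega : k + 1 ≤ l) hl
            rw [hlt] at this
            linarith
          have h2 := π.t_le h1 hk.le
          rw [hlt] at h2
          linarith
        rw [π.disc_eval F hk ⟨hk1, hk2⟩, hkt, dist_self]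
        linarith
      · have ht0 : 0 < t := by
          rcases eq_or_lt_of_le ht.1 with h | h
          · exact absurd ⟨0, 0, Nat.zero_le _, by rw [π.first]; exact h⟩ hpt
          · exact h
        have htIoc : t ∈ Ioc (0:ℝ) T := ⟨ht0, ht.2.le⟩
        have hnj : Function.leftLim F t = F t := by
          by_contra hne
          exact hpt (hJ ⟨htIoc, hne⟩)
        obtain ⟨l, hl⟩ := hF.2 t htIoc
        have hLeq : Function.leftLim F t = l :=
          leftLim_eq_of_tendsto hl
        have hl' : Tendsto F (𝓝[<] t) (𝓝 (F t)) := by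
          rw [← hnj, hLeq]; exact hl
        obtain ⟨δ₂, hδ₂pos, hδ₂⟩ := Metric.tendsto_nhdsWithin_nhds.mp hl' (ε/2) (by linarith)
        obtain ⟨M, hM⟩ := π.mesh δ₂ hδ₂pos
        refine ⟨M, fun n hn => ?_⟩
        obtain ⟨k, hk, hk1, hk2⟩ := π.exists_interval n ht.1 ht.2
        rw [π.disc_eval F hk ⟨hk1, hk2⟩]
        have hkt : π.t n k < t := lt_of_le_of_ne hk1 (fun h => hpt ⟨n, k, hk.le, h⟩)
        apply hδ₂ (Set.mem_Iio.mpr hkt)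
        rw [Real.dist_eq, abs_of_nonpos (by linarith)]
        linarith [hM n hn k hk]
    obtain ⟨M, hMd⟩ := step2
    have key : ∀ M₀ : ℕ, ∃ v, t < v ∧ v ≤ T ∧ ∀ n < M₀, ∀ s, t < s → s ≤ v →
        π.disc F n s = π.disc F n t := by
      intro M₀
      induction M₀ with
      | zero => exact ⟨T, ht.2, le_refl T, fun n hn => absurd hn (Nat.not_lt_zero n)⟩
      | succ m ih =>
        obtain ⟨v, hv1, hv2, hv3⟩ := ih
        obtain ⟨k, hk, hk1, hk2⟩ := π.exists_interval m ht.1 ht.2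
        refine ⟨min v ((t + π.t m (k+1))/2), lt_min hv1 (by linarith),
          le_trans (min_le_left _ _) hv2, ?_⟩
        intro n hn s hts hsv
        rcases Nat.lt_succ_iff_lt_or_eq.mp hn with h | h
        · exact hv3 n h s hts (le_trans hsv (min_le_left _ _))
        · subst h
          have hs2 : s < π.t n (k+1) := by
            have := le_trans hsv (min_le_right _ _)
            linarith
          rw [π.disc_eval F hk ⟨le_trans hk1 hts.le, hs2⟩, π.disc_eval F hk ⟨hk1, hk2⟩]
    obtain ⟨v, hv1, hv2, hv3⟩ := key M
    refine ⟨min v (t + δ₁/2), ⟨lt_min hv1 (by linarith), le_trans (min_le_left _ _) hv2⟩, ?_⟩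
    intro s hs n
    rcases lt_or_ge n M with hn | hn
    · rw [hv3 n hn s hs.1 (le_trans hs.2 (min_le_left _ _)), sub_self, norm_zero]
      exact hε
    · have hd2 : dist (π.disc F n t) (F t) < ε/2 := hMd n hn
      have hsv : s ≤ t + δ₁/2 := le_trans hs.2 (min_le_right _ _)
      have hd1 : dist (π.disc F n s) (F t) < ε/2 := by
        have hsT : s ≤ T := le_trans hs.2 (le_trans (min_le_left _ _) hv2)
        rcases eq_or_lt_of_le hsT with h | h
        · have hTd : T ≤ t + δ₁/2 := h ▸ hsv
          rw [h, π.disc_eval_T F n]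
          apply hδ₁ (Set.mem_Ioi.mpr ht.2)
          rw [Real.dist_eq, abs_of_nonneg (by linarith [ht.2])]
          linarith
        · obtain ⟨k, hk, hk1, hk2⟩ :=
            π.exists_interval n (by linarith [ht.1, hs.1] : (0:ℝ) ≤ s) h
          rw [π.disc_eval F hk ⟨hk1, hk2⟩]
          rcases le_or_gt (π.t n k) t with hkt | hkt
          · have heq : π.disc F n t = F (π.t n k) :=
              π.disc_eval F hk ⟨hkt, lt_trans hs.1 hk2⟩
            rw [← heq]
            exact hd2
          · apply hδ₁ (Set.mem_Ioi.mpr hkt)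
            rw [Real.dist_eq, abs_of_nonneg (by linarith)]
            linarith
      calc ‖π.disc F n s - π.disc F n t‖
          = dist (π.disc F n s) (π.disc F n t) := (dist_eq_norm _ _).symm
        _ ≤ dist (π.disc F n s) (F t) + dist (F t) (π.disc F n t) := dist_triangle _ _ _
        _ < ε := by rw [dist_comm (F t)]; linarith
end
end
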